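/- Let Π be a reversible Markov kernel on (X,𝓔) with finite reversing measure m, and let κ be its Cheeger constant. If g ∈ L²(X,m) takes values in [0,∞) and m({x : g(x) > 0}) ≤ m(X)/2, then 𝓔₂(g) ≥ (κ²/2)·‖g‖²_{m,2}. -/

import Mathlib

open MeasureTheory ProbabilityTheory ENNReal

noncomputable section

/-- The `m`-size of the boundary of `A` with respect to the Markov kernel `Π`:
`|∂_Π A|_m = ∫_A Π(x, X∖A) dm(x)`. -/
def boundarySize {X : Type*} [MeasurableSpace X] (K : Kernel X X) (m : Measure X)
    (A : Set X) : ℝ :=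
  (∫⁻ x in A, K x Aᶜ ∂m).toReal

/-- The Cheeger constant of the Markov kernel `Π` with respect to `m`:
`κ = inf { |∂_Π A|_m / m(A) : A measurable, 0 < m(A) ≤ m(X)/2 }`. -/
def cheegerConst {X : Type*} [MeasurableSpace X] (K : Kernel X X) (m : Measure X) : ℝ :=
  sInf { q : ℝ | ∃ A : Set X, MeasurableSet A ∧ 0 < m A ∧ m A ≤ m Set.univ / 2 ∧
    q = boundarySize K m A / (m A).toReal }


/-- The `2`-Dirichlet energy `𝓔₂(f) = (1/2) ∫_{X×X} |f(x) − f(y)|² dμ(x,y)` where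
`μ = m ⊗ₘ K` is the measure on `X × X` determined by `μ(A×B) = ∫_A K(x,B) dm(x)`. -/
def dirichletEnergy2 {X : Type*} [MeasurableSpace X] (K : Kernel X X) (m : Measure X)
    (f : X → ℝ) : ℝ :=
  (1 / 2) * ∫ p, (f p.1 - f p.2) ^ 2 ∂(m.compProd K)

lemma cheegerConst_nonneg {X : Type*} [MeasurableSpace X] (K : Kernel X X) (m : Measure X) :
    0 ≤ cheegerConst K m := by
  apply Real.sInf_nonneg
  rintro q ⟨A, hA, h0, h2, rfl⟩
  exact div_nonneg ENNReal.toReal_nonneg ENNReal.toReal_nonneg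

lemma vol_Ico_inter_Ioi (a b : ℝ) (hb : 0 ≤ b) :
    volume (Set.Ico b a ∩ Set.Ioi 0) = ENNReal.ofReal (a - b) := by
  rcases hb.eq_or_lt with hb0 | hb0
  · subst hb0
    have : Set.Ico (0:ℝ) a ∩ Set.Ioi 0 = Set.Ioo 0 a := by
      ext t
      simp only [Set.mem_inter_iff, Set.mem_Ico, Set.mem_Ioi, Set.mem_Ioo]
      exact ⟨fun ⟨⟨_, h2⟩, h3⟩ => ⟨h3, h2⟩, fun ⟨h1, h2⟩ => ⟨⟨h1.le, h2⟩, h1⟩⟩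
    rw [this, Real.volume_Ioo, sub_zero]
  · have : Set.Ico b a ∩ Set.Ioi 0 = Set.Ico b a :=
      Set.inter_eq_left.mpr fun t ht => lt_of_lt_of_le hb0 ht.1
    rw [this, Real.volume_Ico]

lemma ofReal_sub_add_ofReal_sub (c d : ℝ) :
    ENNReal.ofReal (c - d) + ENNReal.ofReal (d - c) = ENNReal.ofReal |c - d| := by
  rcases le_total d c with h | h
  · rw [show ENNReal.ofReal (d - c) = 0 from ENNReal.ofReal_of_nonpos (by linarith),
      add_zero, abs_of_nonneg (by linarith)]
  · rw [show ENNReal.ofReal (c - d) = 0 from ENNReal.ofReal_of_nonpos (by linarith),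
      zero_add, abs_of_nonpos (by linarith), neg_sub]

section Core

variable {X : Type*} [MeasurableSpace X] (K : Kernel X X) [IsMarkovKernel K]
  (m : Measure X) [IsFiniteMeasure m]

/-- first marginal -/
lemma lintegral_fst_compProd (F : X → ℝ≥0∞) (hF : Measurable F) :
    ∫⁻ p, F p.1 ∂(m.compProd K) = ∫⁻ x, F x ∂m := by
  rw [Measure.lintegral_compProd (show Measurable fun p : X × X => F p.1 from hF.comp measurable_fst)]
  simp

/-- second marginal, via symmetry -/
lemma lintegral_snd_compProd (hsymm : (m.compProd K).map Prod.swap = m.compProd K)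
    (F : X → ℝ≥0∞) (hF : Measurable F) :
    ∫⁻ p, F p.2 ∂(m.compProd K) = ∫⁻ x, F x ∂m := by
  conv_lhs => rw [← hsymm]
  rw [lintegral_map (show Measurable fun p : X × X => F p.2 from hF.comp measurable_snd) measurable_swap]
  exact lintegral_fst_compProd K m F hF

end Core

lemma core_ineq {X : Type*} [MeasurableSpace X] (K : Kernel X X) [IsMarkovKernel K]
    (m : Measure X) [IsFiniteMeasure m]
    (hsymm : (m.compProd K).map Prod.swap = m.compProd K)
    (g : X → ℝ) (hgm : Measurable g) (hg0 : ∀ x, 0 ≤ g x)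
    (hItop : ∫⁻ x, ENNReal.ofReal (g x ^ 2) ∂m ≠ ⊤)
    (hsupp : m {x | 0 < g x} ≤ m Set.univ / 2) :
    ENNReal.ofReal (cheegerConst K m) ^ 2 * ∫⁻ x, ENNReal.ofReal (g x ^ 2) ∂m
      ≤ ∫⁻ p, ENNReal.ofReal ((g p.1 - g p.2) ^ 2) ∂(m.compProd K) := by
  have hκ0 : 0 ≤ cheegerConst K m := cheegerConst_nonneg K m
  set κ : ℝ := cheegerConst K m with hκdef
  set μ : Measure (X × X) := m.compProd K with hμdef
  set I : ℝ≥0∞ := ∫⁻ x, ENNReal.ofReal (g x ^ 2) ∂m with hIdef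
  set E : ℝ≥0∞ := ∫⁻ p, ENNReal.ofReal ((g p.1 - g p.2) ^ 2) ∂μ with hEdef
  by_cases hI0 : I = 0
  · rw [hI0, mul_zero]; exact zero_le
  have hg2 : Measurable fun x => g x ^ 2 := hgm.pow_const 2
  have hAmeas : ∀ t : ℝ, MeasurableSet {x | t < g x ^ 2} :=
    fun t => measurableSet_lt measurable_const hg2
  -- Step 1: Cheeger bound for superlevel sets
  have step1 : ∀ t ∈ Set.Ioi (0:ℝ), ENNReal.ofReal κ * m {x | t < g x ^ 2}
      ≤ μ ({x | t < g x ^ 2} ×ˢ {x | t < g x ^ 2}ᶜ) := by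
    intro t ht
    set A : Set X := {x | t < g x ^ 2} with hAdef
    by_cases hmA : m A = 0
    · rw [hmA, mul_zero]; exact zero_le
    · have hApos : 0 < m A := pos_iff_ne_zero.mpr hmA
      have hsub : A ⊆ {x | 0 < g x} := by
        intro x hx
        rcases (hg0 x).eq_or_lt with h | h
        · exfalso
          have : g x ^ 2 = 0 := by rw [← h]; ring
          simp only [hAdef, Set.mem_setOf_eq, this] at hx
          exact absurd (lt_trans ht hx) (lt_irrefl 0)
        · exact h
      have hA2 : m A ≤ m Set.univ / 2 := le_trans (measure_mono hsub) hsupp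
      have hmem : boundarySize K m A / (m A).toReal ∈
          { q : ℝ | ∃ A : Set X, MeasurableSet A ∧ 0 < m A ∧ m A ≤ m Set.univ / 2 ∧
            q = boundarySize K m A / (m A).toReal } := ⟨A, hAmeas t, hApos, hA2, rfl⟩
      have hbdd : BddBelow { q : ℝ | ∃ A : Set X, MeasurableSet A ∧ 0 < m A ∧
          m A ≤ m Set.univ / 2 ∧ q = boundarySize K m A / (m A).toReal } := by
        refine ⟨0, ?_⟩
        rintro q ⟨B, hB, h0, h2, rfl⟩
        exact div_nonneg ENNReal.toReal_nonneg ENNReal.toReal_nonneg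
      have hκle : κ ≤ boundarySize K m A / (m A).toReal := csInf_le hbdd hmem
      have hrpos : 0 < (m A).toReal :=
        ENNReal.toReal_pos hmA (measure_ne_top m A)
      have hκmul : κ * (m A).toReal ≤ boundarySize K m A :=
        (le_div_iff₀ hrpos).mp hκle
      have hbfin : (∫⁻ x in A, K x Aᶜ ∂m) ≠ ⊤ := by
        refine ne_of_lt (lt_of_le_of_lt ?_ (measure_lt_top m Set.univ))
        calc ∫⁻ x in A, K x Aᶜ ∂m ≤ ∫⁻ _ in A, 1 ∂m :=
              lintegral_mono fun x => prob_le_one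
          _ = m A := by simp
          _ ≤ m Set.univ := measure_mono (Set.subset_univ A)
      have : ENNReal.ofReal κ * m A = ENNReal.ofReal (κ * (m A).toReal) := by
        rw [ENNReal.ofReal_mul hκ0, ENNReal.ofReal_toReal (measure_ne_top m A)]
      rw [this, Measure.compProd_apply_prod (hAmeas t) (hAmeas t).compl]
      calc ENNReal.ofReal (κ * (m A).toReal)
          ≤ ENNReal.ofReal (boundarySize K m A) := ENNReal.ofReal_le_ofReal hκmul
        _ = ∫⁻ x in A, K x Aᶜ ∂m := by
            rw [boundarySize, ENNReal.ofReal_toReal hbfin]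
  -- layer cake
  have layer : I = ∫⁻ t in Set.Ioi 0, m {x | t < g x ^ 2} :=
    lintegral_eq_lintegral_meas_lt m (ae_of_all _ fun x => sq_nonneg _) hg2.aemeasurable
  have hPm : ∀ t : ℝ, MeasurableSet {p : X × X | t < g p.1 ^ 2 ∧ ¬ t < g p.2 ^ 2} := by
    intro t
    have h1 : MeasurableSet {p : X × X | t < g p.1 ^ 2} :=
      measurableSet_lt measurable_const (hg2.comp measurable_fst)
    have h2 : MeasurableSet {p : X × X | t < g p.2 ^ 2} :=
      measurableSet_lt measurable_const (hg2.comp measurable_snd)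
    exact h1.inter h2.compl
  have hSmeas : MeasurableSet {q : ℝ × (X × X) | q.1 < g q.2.1 ^ 2 ∧ ¬ q.1 < g q.2.2 ^ 2} := by
    have h1 : MeasurableSet {q : ℝ × (X × X) | q.1 < g q.2.1 ^ 2} :=
      measurableSet_lt measurable_fst (hg2.comp (measurable_fst.comp measurable_snd))
    have h2 : MeasurableSet {q : ℝ × (X × X) | q.1 < g q.2.2 ^ 2} :=
      measurableSet_lt measurable_fst (hg2.comp (measurable_snd.comp measurable_snd))
    exact h1.inter h2.compl
  have fubini : ∫⁻ t in Set.Ioi 0, μ ({x | t < g x ^ 2} ×ˢ {x | t < g x ^ 2}ᶜ)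
      = ∫⁻ p, ENNReal.ofReal (g p.1 ^ 2 - g p.2 ^ 2) ∂μ := by
    have hset : ∀ t : ℝ, {x | t < g x ^ 2} ×ˢ {x | t < g x ^ 2}ᶜ
        = {p : X × X | t < g p.1 ^ 2 ∧ ¬ t < g p.2 ^ 2} := by
      intro t; ext p
      simp only [Set.mem_prod, Set.mem_setOf_eq, Set.mem_compl_iff]
    simp_rw [hset]
    have hunc : Measurable (Function.uncurry (fun (t : ℝ) (p : X × X) =>
        Set.indicator {p : X × X | t < g p.1 ^ 2 ∧ ¬ t < g p.2 ^ 2}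
          (1 : X × X → ℝ≥0∞) p)) := by
      have heq : Function.uncurry (fun (t : ℝ) (p : X × X) =>
          Set.indicator {p : X × X | t < g p.1 ^ 2 ∧ ¬ t < g p.2 ^ 2}
            (1 : X × X → ℝ≥0∞) p)
          = Set.indicator {q : ℝ × (X × X) | q.1 < g q.2.1 ^ 2 ∧ ¬ q.1 < g q.2.2 ^ 2}
            (fun _ => (1 : ℝ≥0∞)) := by
        funext q
        show Set.indicator _ _ q.2 = _
        simp only [Set.indicator_apply, Set.mem_setOf_eq, Pi.one_apply]
      rw [heq]
      exact measurable_one.indicator hSmeas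
    calc ∫⁻ t in Set.Ioi 0, μ {p : X × X | t < g p.1 ^ 2 ∧ ¬ t < g p.2 ^ 2}
        = ∫⁻ t in Set.Ioi 0, ∫⁻ p, Set.indicator
            {p : X × X | t < g p.1 ^ 2 ∧ ¬ t < g p.2 ^ 2} (1 : X × X → ℝ≥0∞) p ∂μ := by
          refine lintegral_congr fun t => ?_
          rw [lintegral_indicator_one (hPm t)]
      _ = ∫⁻ p, ∫⁻ t in Set.Ioi 0, Set.indicator
            {p : X × X | t < g p.1 ^ 2 ∧ ¬ t < g p.2 ^ 2} (1 : X × X → ℝ≥0∞) p ∂volume ∂μ :=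
          lintegral_lintegral_swap hunc.aemeasurable
      _ = ∫⁻ p, ENNReal.ofReal (g p.1 ^ 2 - g p.2 ^ 2) ∂μ := by
          refine lintegral_congr fun p => ?_
          have heq2 : (fun t : ℝ => Set.indicator
              {p : X × X | t < g p.1 ^ 2 ∧ ¬ t < g p.2 ^ 2} (1 : X × X → ℝ≥0∞) p)
              = Set.indicator (Set.Ico (g p.2 ^ 2) (g p.1 ^ 2)) (1 : ℝ → ℝ≥0∞) := by
            funext t
            simp only [Set.indicator_apply, Set.mem_setOf_eq, Set.mem_Ico, Pi.one_apply,
              not_lt]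
            by_cases h1 : g p.2 ^ 2 ≤ t
            · by_cases h2 : t < g p.1 ^ 2
              · rw [if_pos ⟨h2, h1⟩, if_pos ⟨h1, h2⟩]
              · rw [if_neg (fun c => h2 c.1), if_neg (fun c => h2 c.2)]
            · rw [if_neg (fun c => h1 c.2), if_neg (fun c => h1 c.1)]
          rw [heq2, lintegral_indicator_one measurableSet_Ico,
            Measure.restrict_apply measurableSet_Ico,
            vol_Ico_inter_Ioi _ _ (sq_nonneg _)]
  have h1 : ENNReal.ofReal κ * I ≤ ∫⁻ p, ENNReal.ofReal (g p.1 ^ 2 - g p.2 ^ 2) ∂μ := by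
    rw [layer, ← lintegral_const_mul' _ _ ENNReal.ofReal_ne_top, ← fubini]
    exact lintegral_mono_ae ((ae_restrict_iff' measurableSet_Ioi).2 (ae_of_all _ step1))
  -- marginals
  have hmarg1 : ∀ F : X → ℝ≥0∞, Measurable F → ∫⁻ p, F p.1 ∂μ = ∫⁻ x, F x ∂m :=
    fun F hF => by rw [hμdef]; exact lintegral_fst_compProd K m F hF
  have hsymm' : (m.compProd K).map Prod.swap = m.compProd K := by rw [← hμdef]; exact hsymm
  have hmarg2 : ∀ F : X → ℝ≥0∞, Measurable F → ∫⁻ p, F p.2 ∂μ = ∫⁻ x, F x ∂m :=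
    fun F hF => by rw [hμdef]; exact lintegral_snd_compProd K m hsymm' F hF
  -- symmetrization
  have hmeas_sub : Measurable fun p : X × X => ENNReal.ofReal (g p.1 ^ 2 - g p.2 ^ 2) :=
    ((hg2.comp measurable_fst).sub (hg2.comp measurable_snd)).ennreal_ofReal
  have hmeas_sub' : Measurable fun p : X × X => ENNReal.ofReal (g p.2 ^ 2 - g p.1 ^ 2) :=
    ((hg2.comp measurable_snd).sub (hg2.comp measurable_fst)).ennreal_ofReal
  have symmJ : ∫⁻ p, ENNReal.ofReal (g p.2 ^ 2 - g p.1 ^ 2) ∂μ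
      = ∫⁻ p, ENNReal.ofReal (g p.1 ^ 2 - g p.2 ^ 2) ∂μ := by
    conv_lhs => rw [← hsymm]
    rw [lintegral_map hmeas_sub' measurable_swap]
    rfl
  have habs : (∫⁻ p, ENNReal.ofReal (g p.1 ^ 2 - g p.2 ^ 2) ∂μ)
      + (∫⁻ p, ENNReal.ofReal (g p.1 ^ 2 - g p.2 ^ 2) ∂μ)
      = ∫⁻ p, ENNReal.ofReal |g p.1 ^ 2 - g p.2 ^ 2| ∂μ := by
    nth_rewrite 2 [← symmJ]
    rw [← lintegral_add_left hmeas_sub]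
    exact lintegral_congr fun p => ofReal_sub_add_ofReal_sub _ _
  -- Cauchy-Schwarz
  have hconj : Real.HolderConjugate 2 2 := Real.HolderConjugate.two_two
  have hfa : Measurable fun p : X × X => ENNReal.ofReal |g p.1 - g p.2| :=
    (((hgm.comp measurable_fst).sub (hgm.comp measurable_snd)).abs).ennreal_ofReal
  have hfb : Measurable fun p : X × X => ENNReal.ofReal (g p.1 + g p.2) :=
    ((hgm.comp measurable_fst).add (hgm.comp measurable_snd)).ennreal_ofReal
  have CS := ENNReal.lintegral_mul_le_Lp_mul_Lq μ hconj hfa.aemeasurable hfb.aemeasurable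
  have hmulpt : ∀ p : X × X, ((fun p : X × X => ENNReal.ofReal |g p.1 - g p.2|)
      * fun p : X × X => ENNReal.ofReal (g p.1 + g p.2)) p
      = ENNReal.ofReal |g p.1 ^ 2 - g p.2 ^ 2| := by
    intro p
    have hab : |g p.1 ^ 2 - g p.2 ^ 2| = |g p.1 - g p.2| * (g p.1 + g p.2) := by
      have h1 : g p.1 ^ 2 - g p.2 ^ 2 = (g p.1 - g p.2) * (g p.1 + g p.2) := by ring
      rw [h1, abs_mul, abs_of_nonneg (add_nonneg (hg0 _) (hg0 _))]
    simp only [Pi.mul_apply]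
    rw [hab, ENNReal.ofReal_mul (abs_nonneg _)]
  have hpow1 : ∀ p : X × X, ENNReal.ofReal |g p.1 - g p.2| ^ (2:ℝ)
      = ENNReal.ofReal ((g p.1 - g p.2) ^ 2) := by
    intro p
    rw [show ((2:ℝ)) = ((2:ℕ):ℝ) by norm_num, ENNReal.rpow_natCast,
      ← ENNReal.ofReal_pow (abs_nonneg _), sq_abs]
  have hpow2 : ∀ p : X × X, ENNReal.ofReal (g p.1 + g p.2) ^ (2:ℝ)
      = ENNReal.ofReal ((g p.1 + g p.2) ^ 2) := by
    intro p
    rw [show ((2:ℝ)) = ((2:ℕ):ℝ) by norm_num, ENNReal.rpow_natCast,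
      ← ENNReal.ofReal_pow (add_nonneg (hg0 _) (hg0 _))]
  simp_rw [hmulpt, hpow1, hpow2] at CS
  -- bound the second factor
  have hQ : ∫⁻ p, ENNReal.ofReal ((g p.1 + g p.2) ^ 2) ∂μ ≤ 4 * I := by
    have hpt : ∀ p : X × X, ENNReal.ofReal ((g p.1 + g p.2) ^ 2)
        ≤ ENNReal.ofReal (2 * g p.1 ^ 2) + ENNReal.ofReal (2 * g p.2 ^ 2) := by
      intro p
      rw [← ENNReal.ofReal_add (by positivity) (by positivity)]
      exact ENNReal.ofReal_le_ofReal (by nlinarith [sq_nonneg (g p.1 - g p.2)])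
    have hconst : ∫⁻ x, ENNReal.ofReal (2 * g x ^ 2) ∂m = 2 * I := by
      simp_rw [ENNReal.ofReal_mul (by norm_num : (0:ℝ) ≤ 2)]
      rw [lintegral_const_mul' _ _ ENNReal.ofReal_ne_top, hIdef]
      norm_num
    calc ∫⁻ p, ENNReal.ofReal ((g p.1 + g p.2) ^ 2) ∂μ
        ≤ ∫⁻ p, (ENNReal.ofReal (2 * g p.1 ^ 2) + ENNReal.ofReal (2 * g p.2 ^ 2)) ∂μ :=
          lintegral_mono hpt
      _ = (∫⁻ p, ENNReal.ofReal (2 * g p.1 ^ 2) ∂μ)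
          + ∫⁻ p, ENNReal.ofReal (2 * g p.2 ^ 2) ∂μ :=
          lintegral_add_left ((hg2.comp measurable_fst).const_mul 2).ennreal_ofReal _
      _ = 2 * I + 2 * I := by
          rw [hmarg1 (fun x => ENNReal.ofReal (2 * g x ^ 2)) (hg2.const_mul 2).ennreal_ofReal,
            hmarg2 (fun x => ENNReal.ofReal (2 * g x ^ 2)) (hg2.const_mul 2).ennreal_ofReal,
            hconst]
      _ = 4 * I := by ring
  have h4 : (4:ℝ≥0∞) ^ ((1:ℝ)/2) = 2 := by
    rw [show (4:ℝ≥0∞) = 2 ^ (2:ℕ) by norm_num, ← ENNReal.rpow_natCast 2 2,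
      ← ENNReal.rpow_mul]
    norm_num
  -- combine
  have key : 2 * (ENNReal.ofReal κ * I) ≤ 2 * (E ^ ((1:ℝ)/2) * I ^ ((1:ℝ)/2)) := by
    calc 2 * (ENNReal.ofReal κ * I)
        = (ENNReal.ofReal κ * I) + (ENNReal.ofReal κ * I) := by ring
      _ ≤ (∫⁻ p, ENNReal.ofReal (g p.1 ^ 2 - g p.2 ^ 2) ∂μ)
          + (∫⁻ p, ENNReal.ofReal (g p.1 ^ 2 - g p.2 ^ 2) ∂μ) := add_le_add h1 h1
      _ = ∫⁻ p, ENNReal.ofReal |g p.1 ^ 2 - g p.2 ^ 2| ∂μ := habs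
      _ ≤ (∫⁻ p, ENNReal.ofReal ((g p.1 - g p.2) ^ 2) ∂μ) ^ ((1:ℝ)/2)
          * (∫⁻ p, ENNReal.ofReal ((g p.1 + g p.2) ^ 2) ∂μ) ^ ((1:ℝ)/2) := CS
      _ ≤ E ^ ((1:ℝ)/2) * (4 * I) ^ ((1:ℝ)/2) := by
          rw [hEdef]
          exact mul_le_mul' le_rfl (ENNReal.rpow_le_rpow hQ (by norm_num))
      _ = 2 * (E ^ ((1:ℝ)/2) * I ^ ((1:ℝ)/2)) := by
          rw [ENNReal.mul_rpow_of_nonneg _ _ (by norm_num : (0:ℝ) ≤ 1/2), h4]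
          ring
  have hfinal1 : ENNReal.ofReal κ * I ≤ E ^ ((1:ℝ)/2) * I ^ ((1:ℝ)/2) :=
    (ENNReal.mul_le_mul_iff_right (by norm_num) (by norm_num)).mp key
  have hIsplit : I ^ ((1:ℝ)/2) * I ^ ((1:ℝ)/2) = I := by
    rw [← ENNReal.rpow_add _ _ hI0 hItop]
    norm_num [ENNReal.rpow_one]
  have hhalf0 : I ^ ((1:ℝ)/2) ≠ 0 :=
    ne_of_gt (ENNReal.rpow_pos (pos_iff_ne_zero.mpr hI0) hItop)
  have hhalftop : I ^ ((1:ℝ)/2) ≠ ⊤ :=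
    ENNReal.rpow_ne_top_of_nonneg (by norm_num) hItop
  have hsq : ENNReal.ofReal κ * I ^ ((1:ℝ)/2) ≤ E ^ ((1:ℝ)/2) := by
    have h' : (ENNReal.ofReal κ * I ^ ((1:ℝ)/2)) * I ^ ((1:ℝ)/2)
        ≤ E ^ ((1:ℝ)/2) * I ^ ((1:ℝ)/2) := by
      rw [mul_assoc, hIsplit]
      exact hfinal1
    exact (ENNReal.mul_le_mul_iff_left hhalf0 hhalftop).mp h'
  calc ENNReal.ofReal κ ^ 2 * I
      = (ENNReal.ofReal κ * I ^ ((1:ℝ)/2)) * (ENNReal.ofReal κ * I ^ ((1:ℝ)/2)) := by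
        conv_lhs => rw [← hIsplit]
        ring
    _ ≤ E ^ ((1:ℝ)/2) * E ^ ((1:ℝ)/2) := mul_le_mul' hsq hsq
    _ = E := by
        rw [← sq, ← ENNReal.rpow_natCast (E ^ ((1:ℝ)/2)) 2, ← ENNReal.rpow_mul]
        norm_num [ENNReal.rpow_one]


lemma compProd_map_swap_aux {X : Type*} [MeasurableSpace X]
    (K : Kernel X X) [IsMarkovKernel K] (m : Measure X) [IsFiniteMeasure m]
    (hrev : ∀ f g : X → ℝ, Measurable f → Measurable g →
      (∃ C, ∀ x, |f x| ≤ C) → (∃ C, ∀ x, |g x| ≤ C) →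
      ∫ x, f x * (∫ y, g y ∂(K x)) ∂m = ∫ x, (∫ y, f y ∂(K x)) * g x ∂m) :
    (m.compProd K).map Prod.swap = m.compProd K := by
  have hrect : ∀ A B : Set X, MeasurableSet A → MeasurableSet B →
      (m.compProd K) (A ×ˢ B) = (m.compProd K) (B ×ˢ A) := by
    intro A B hA hB
    have hbd : ∀ (s : Set X), ∃ C, ∀ x, |s.indicator (1 : X → ℝ) x| ≤ C := by
      intro s
      refine ⟨1, fun x => ?_⟩
      by_cases hx : x ∈ s <;> simp [Set.indicator_apply, hx]
    have h := hrev (A.indicator 1) (B.indicator 1) (measurable_one.indicator hA)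
      (measurable_one.indicator hB) (hbd A) (hbd B)
    have hKB : ∀ x, ∫ y, B.indicator (1:X→ℝ) y ∂(K x) = (K x B).toReal := fun x =>
      integral_indicator_one hB
    have hKA : ∀ x, ∫ y, A.indicator (1:X→ℝ) y ∂(K x) = (K x A).toReal := fun x =>
      integral_indicator_one hA
    simp_rw [hKB, hKA] at h
    have hind : ∀ (s : Set X) (h : X → ℝ),
        (fun x => s.indicator (1:X→ℝ) x * h x) = s.indicator h := by
      intro s h
      funext x
      by_cases hx : x ∈ s <;> simp [Set.indicator_apply, hx]
    have hind' : ∀ (s : Set X) (h : X → ℝ),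
        (fun x => h x * s.indicator (1:X→ℝ) x) = s.indicator h := by
      intro s h
      funext x
      by_cases hx : x ∈ s <;> simp [Set.indicator_apply, hx]
    rw [show (fun x => A.indicator (1:X→ℝ) x * (K x B).toReal)
        = A.indicator (fun x => (K x B).toReal) from hind A _] at h
    rw [show (fun x => (K x A).toReal * B.indicator (1:X→ℝ) x)
        = B.indicator (fun x => (K x A).toReal) from hind' B _] at h
    rw [integral_indicator hA, integral_indicator hB] at h
    have htr : ∀ (s t : Set X), MeasurableSet t →
        ∫ x in s, (K x t).toReal ∂m = (∫⁻ x in s, K x t ∂m).toReal := by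
      intro s t ht
      rw [integral_toReal ((K.measurable_coe ht).aemeasurable) (ae_of_all _ fun x =>
        measure_lt_top (K x) t)]
    rw [htr A B hB, htr B A hA] at h
    rw [Measure.compProd_apply_prod hA hB, Measure.compProd_apply_prod hB hA]
    exact (ENNReal.toReal_eq_toReal_iff' (by
      rw [← Measure.compProd_apply_prod hA hB]; exact measure_ne_top _ _) (by
      rw [← Measure.compProd_apply_prod hB hA]; exact measure_ne_top _ _)).mp h
  refine MeasureTheory.ext_of_generate_finite _ generateFrom_prod.symm isPiSystem_prod ?_ ?_
  · rintro s ⟨A, hA, B, hB, rfl⟩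
    rw [Measure.map_apply measurable_swap ((hA : MeasurableSet A).prod hB),
      Set.preimage_swap_prod]
    exact hrect B A hB hA
  · rw [Measure.map_apply measurable_swap MeasurableSet.univ, Set.preimage_univ]

/-- **Lemma 3.6.** Let `K` be a reversible Markov kernel on `X` with finite
reversing measure `m` and Cheeger constant `κ`. If `g ∈ L²(X,m)` takes values in `[0,∞)`
and `m({g > 0}) ≤ m(X)/2`, then `𝓔₂(g) ≥ (κ²/2)·‖g‖²_{m,2}`. -/
theorem dirichlet_two_ge_cheeger_sq {X : Type*} [MeasurableSpace X]
    (K : Kernel X X) [IsMarkovKernel K] (m : Measure X) [IsFiniteMeasure m]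
    (hrev : ∀ f g : X → ℝ, Measurable f → Measurable g →
      (∃ C, ∀ x, |f x| ≤ C) → (∃ C, ∀ x, |g x| ≤ C) →
      ∫ x, f x * (∫ y, g y ∂(K x)) ∂m = ∫ x, (∫ y, f y ∂(K x)) * g x ∂m)
    (g : X → ℝ) (hg : MemLp g 2 m) (hg0 : ∀ x, 0 ≤ g x)
    (hsupp : m {x | 0 < g x} ≤ m Set.univ / 2) :
    (cheegerConst K m ^ 2 / 2) * ∫ x, g x ^ 2 ∂m ≤ dirichletEnergy2 K m g := by
  have hsymm : (m.compProd K).map Prod.swap = m.compProd K := compProd_map_swap_aux K m hrev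
  -- measurable nonnegative modification of g
  obtain ⟨g₁, hg₁m, hg₁0, hae⟩ :
      ∃ g₁ : X → ℝ, Measurable g₁ ∧ (∀ x, 0 ≤ g₁ x) ∧ g₁ =ᵐ[m] g := by
    refine ⟨fun x => max (hg.1.mk g x) 0,
      hg.1.stronglyMeasurable_mk.measurable.max measurable_const,
      fun x => le_max_right _ _, ?_⟩
    filter_upwards [hg.1.ae_eq_mk] with x hx
    show max (hg.1.mk g x) 0 = g x
    rw [← hx, max_eq_left (hg0 x)]
  have hg₁L2 : MemLp g₁ 2 m := hg.ae_eq hae.symm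
  have hItop : ∫⁻ x, ENNReal.ofReal (g₁ x ^ 2) ∂m ≠ ⊤ := by
    have hint : Integrable (fun x => g₁ x ^ 2) m := hg₁L2.integrable_sq
    exact ne_of_lt ((hasFiniteIntegral_iff_ofReal
      (ae_of_all _ fun x => sq_nonneg _)).mp hint.hasFiniteIntegral)
  have hsupp₁ : m {x | 0 < g₁ x} ≤ m Set.univ / 2 := by
    have hseteq : {x | 0 < g₁ x} =ᵐ[m] {x | 0 < g x} := by
      filter_upwards [hae] with x hx
      change (0 < g₁ x) = (0 < g x)
      rw [hx]
    rw [measure_congr hseteq]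
    exact hsupp
  -- a.e. equality on the product
  set N : Set X := toMeasurable m {x | g₁ x ≠ g x} with hNdef
  have hNmeas : MeasurableSet N := measurableSet_toMeasurable m _
  have hNnull : m N = 0 := by
    rw [hNdef, measure_toMeasurable]
    exact hae
  have hsubN : ∀ x, x ∉ N → g₁ x = g x := by
    intro x hx
    by_contra hc
    exact hx (subset_toMeasurable m _ hc)
  have hprodnull1 : (m.compProd K) (N ×ˢ Set.univ) = 0 := by
    rw [Measure.compProd_apply_prod hNmeas MeasurableSet.univ]
    have : ∀ x, K x Set.univ = 1 := fun x => measure_univ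
    simp only [this]
    rw [setLIntegral_one, hNnull]
  have hprodnull2 : (m.compProd K) (Set.univ ×ˢ N) = 0 := by
    have heq : (m.compProd K) (Set.univ ×ˢ N) = (m.compProd K) (N ×ˢ Set.univ) := by
      conv_lhs => rw [← hsymm]
      rw [Measure.map_apply measurable_swap (MeasurableSet.univ.prod hNmeas),
        Set.preimage_swap_prod]
    rw [heq, hprodnull1]
  have haeμ : ∀ᵐ p ∂(m.compProd K), (g₁ p.1 - g₁ p.2) ^ 2 = (g p.1 - g p.2) ^ 2 := by
    rw [ae_iff]
    refine measure_mono_null ?_ (measure_union_null hprodnull1 hprodnull2)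
    intro p hp
    by_cases h1 : p.1 ∈ N
    · exact Set.mem_union_left _ ⟨h1, Set.mem_univ _⟩
    · by_cases h2 : p.2 ∈ N
      · exact Set.mem_union_right _ ⟨Set.mem_univ _, h2⟩
      · exact absurd (by rw [hsubN _ h1, hsubN _ h2]) hp
  -- convert integrals
  have hI : ∫ x, g x ^ 2 ∂m = ∫ x, g₁ x ^ 2 ∂m :=
    integral_congr_ae (by filter_upwards [hae] with x hx; rw [hx])
  have hE : ∫ p, (g p.1 - g p.2) ^ 2 ∂(m.compProd K)
      = ∫ p, (g₁ p.1 - g₁ p.2) ^ 2 ∂(m.compProd K) := (integral_congr_ae haeμ).symm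
  have hIeq : ∫ x, g₁ x ^ 2 ∂m = (∫⁻ x, ENNReal.ofReal (g₁ x ^ 2) ∂m).toReal :=
    integral_eq_lintegral_of_nonneg_ae (ae_of_all _ fun x => sq_nonneg _)
      (hg₁m.pow_const 2).aestronglyMeasurable
  have hEmeas : Measurable fun p : X × X => (g₁ p.1 - g₁ p.2) ^ 2 :=
    ((hg₁m.comp measurable_fst).sub (hg₁m.comp measurable_snd)).pow_const 2
  have hEeq : ∫ p, (g₁ p.1 - g₁ p.2) ^ 2 ∂(m.compProd K)
      = (∫⁻ p, ENNReal.ofReal ((g₁ p.1 - g₁ p.2) ^ 2) ∂(m.compProd K)).toReal :=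
    integral_eq_lintegral_of_nonneg_ae (ae_of_all _ fun p => sq_nonneg _)
      hEmeas.aestronglyMeasurable
  -- finiteness of the energy
  have hg₁2 : Measurable fun x => g₁ x ^ 2 := hg₁m.pow_const 2
  have hEle : ∫⁻ p, ENNReal.ofReal ((g₁ p.1 - g₁ p.2) ^ 2) ∂(m.compProd K)
      ≤ 4 * ∫⁻ x, ENNReal.ofReal (g₁ x ^ 2) ∂m := by
    have hpt : ∀ p : X × X, ENNReal.ofReal ((g₁ p.1 - g₁ p.2) ^ 2)
        ≤ ENNReal.ofReal (2 * g₁ p.1 ^ 2) + ENNReal.ofReal (2 * g₁ p.2 ^ 2) := by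
      intro p
      rw [← ENNReal.ofReal_add (by positivity) (by positivity)]
      exact ENNReal.ofReal_le_ofReal (by nlinarith [sq_nonneg (g₁ p.1 + g₁ p.2)])
    have hconst : ∫⁻ x, ENNReal.ofReal (2 * g₁ x ^ 2) ∂m
        = 2 * ∫⁻ x, ENNReal.ofReal (g₁ x ^ 2) ∂m := by
      simp_rw [ENNReal.ofReal_mul (by norm_num : (0:ℝ) ≤ 2)]
      rw [lintegral_const_mul' _ _ ENNReal.ofReal_ne_top]
      norm_num
    calc ∫⁻ p, ENNReal.ofReal ((g₁ p.1 - g₁ p.2) ^ 2) ∂(m.compProd K)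
        ≤ ∫⁻ p, (ENNReal.ofReal (2 * g₁ p.1 ^ 2) + ENNReal.ofReal (2 * g₁ p.2 ^ 2))
            ∂(m.compProd K) := lintegral_mono hpt
      _ = (∫⁻ p, ENNReal.ofReal (2 * g₁ p.1 ^ 2) ∂(m.compProd K))
          + ∫⁻ p, ENNReal.ofReal (2 * g₁ p.2 ^ 2) ∂(m.compProd K) :=
          lintegral_add_left ((hg₁2.comp measurable_fst).const_mul 2).ennreal_ofReal _
      _ = 2 * (∫⁻ x, ENNReal.ofReal (g₁ x ^ 2) ∂m)
          + 2 * ∫⁻ x, ENNReal.ofReal (g₁ x ^ 2) ∂m := by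
          rw [lintegral_fst_compProd K m (fun x => ENNReal.ofReal (2 * g₁ x ^ 2))
              (hg₁2.const_mul 2).ennreal_ofReal,
            lintegral_snd_compProd K m hsymm (fun x => ENNReal.ofReal (2 * g₁ x ^ 2))
              (hg₁2.const_mul 2).ennreal_ofReal, hconst]
      _ = 4 * ∫⁻ x, ENNReal.ofReal (g₁ x ^ 2) ∂m := by ring
  have hEtop : ∫⁻ p, ENNReal.ofReal ((g₁ p.1 - g₁ p.2) ^ 2) ∂(m.compProd K) ≠ ⊤ := by
    refine ne_of_lt (lt_of_le_of_lt hEle ?_)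
    exact ENNReal.mul_lt_top (by norm_num) (lt_top_iff_ne_top.mpr hItop)
  -- apply the core inequality
  have hcore := core_ineq K m hsymm g₁ hg₁m hg₁0 hItop hsupp₁
  have hmain := ENNReal.toReal_mono hEtop hcore
  rw [ENNReal.toReal_mul, ENNReal.toReal_pow,
    ENNReal.toReal_ofReal (cheegerConst_nonneg K m)] at hmain
  rw [dirichletEnergy2, hI, hIeq, hE, hEeq]
  linarith
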